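/- arXiv:1805.04779 — 7 statements merged into one kernel-verified Lean document; each statement's English description precedes it below -/
import Mathlib

section
/- Let T be a leaf-oriented binary tree over a linearly ordered key type α satisfying the BST property, and let k : α be a key such that the key k' of searchLeaf(T, k) satisfies k' ≠ k. Then leafKeys(ins(T, k)) = leafKeys(T) ∪ {k}, and k ∉ leafKeys(T). -/
/-- Leaf-oriented binary trees: all keys are stored in the leaves; internal nodes
carry routing keys. -/
inductive LTree (α : Type) where
  | leaf (k : α)
  | node (k : α) (l r : LTree α)

/-- A direction (left or right child) in a binary tree. -/
inductive TDir where
  | left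
  | right
  deriving DecidableEq

namespace LTree

variable {α : Type} [LinearOrder α]

/-- The set of all keys (of leaves and internal nodes) occurring in the tree. -/
def keys : LTree α → Set α
  | leaf k => {k}
  | node m l r => {m} ∪ l.keys ∪ r.keys

/-- The set of keys appearing at the leaves of the tree. -/
def leafKeys : LTree α → Set α
  | leaf k => {k}
  | node _ l r => l.leafKeys ∪ r.leafKeys

/-- The BST property for leaf-oriented trees: at every internal node `node m l r`,
every key occurring in `l` is `< m` and every key occurring in `r` is `≥ m`. -/
def IsBST : LTree α → Prop
  | leaf _ => True
  | node m l r => (∀ x ∈ l.keys, x < m) ∧ (∀ x ∈ r.keys, m ≤ x) ∧ l.IsBST ∧ r.IsBST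

/-- The list of left/right directions followed by the search for key `k`:
at `node m l r` descend left if `k < m` and right otherwise. -/
def searchDirs : LTree α → α → List TDir
  | leaf _, _ => []
  | node m l r, k =>
      if k < m then TDir.left :: l.searchDirs k else TDir.right :: r.searchDirs k

/-- The key of the leaf reached by the search for key `k`. -/
def searchKey : LTree α → α → α
  | leaf k', _ => k'
  | node m l r, k => if k < m then l.searchKey k else r.searchKey k

/-- The subtree at a given position (list of directions), if it exists. -/
def subtreeAt? : LTree α → List TDir → Option (LTree α)
  | t, [] => some t
  | leaf _, _ :: _ => none
  | node _ l _, TDir.left :: ds => l.subtreeAt? ds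
  | node _ _ r, TDir.right :: ds => r.subtreeAt? ds

/-- The insert edit: replace the leaf (with key `k'`) reached by the search for `k`
with `node (max k k') (leaf (min k k')) (leaf (max k k'))`. -/
def ins : LTree α → α → LTree α
  | leaf k', k => node (max k k') (leaf (min k k')) (leaf (max k k'))
  | node m l r, k => if k < m then node m (l.ins k) r else node m l (r.ins k)

/-- The delete edit: letting `p` be the last internal node on the search path for `k`
and `s` the child of `p` not on the path, replace the subtree rooted at `p` by `s`.
(On a single leaf, where the search path has no internal node, this is a no-op.) -/
def del : LTree α → α → LTree α
  | leaf k', _ => leaf k'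
  | node m l r, k =>
      if k < m then
        match l with
        | leaf _ => r
        | node ml ll lr => node m ((node ml ll lr).del k) r
      else
        match r with
        | leaf _ => l
        | node mr rl rr => node m l ((node mr rl rr).del k)

/-- A tree is internal iff its root is an internal node, i.e., the search path for
any key contains at least one internal node. -/
def isInternal : LTree α → Prop
  | leaf _ => False
  | node _ _ _ => True

end LTree


lemma LTree.leafKeys_subset_keys {α : Type} [LinearOrder α] :
    ∀ T : LTree α, T.leafKeys ⊆ T.keys
  | .leaf k => le_refl _
  | .node m l r => by
      intro x hx
      rcases hx with hx | hx
      · exact Or.inl (Or.inr (leafKeys_subset_keys l hx))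
      · exact Or.inr (leafKeys_subset_keys r hx)

lemma LTree.searchKey_of_mem {α : Type} [LinearOrder α] :
    ∀ T : LTree α, T.IsBST → ∀ k, k ∈ T.leafKeys → T.searchKey k = k
  | .leaf k', _, k, hk => hk.symm
  | .node m l r, ⟨hl, hr, hbl, hbr⟩, k, hk => by
      rcases hk with hk | hk
      · have : k < m := hl k (LTree.leafKeys_subset_keys l hk)
        simp [LTree.searchKey, this, LTree.searchKey_of_mem l hbl k hk]
      · have : ¬ k < m := not_lt.mpr (hr k (LTree.leafKeys_subset_keys r hk))
        simp [LTree.searchKey, this, LTree.searchKey_of_mem r hbr k hk]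

lemma LTree.ins_leafKeys {α : Type} [LinearOrder α] :
    ∀ (T : LTree α) (k : α), (T.ins k).leafKeys = T.leafKeys ∪ {k}
  | .leaf k', k => by
      rcases le_total k k' with h | h <;>
        simp [LTree.ins, LTree.leafKeys, min_eq_left, min_eq_right, max_eq_left,
          max_eq_right, h] <;> ext x <;> simp <;> tauto
  | .node m l r, k => by
      by_cases h : k < m <;>
        simp [LTree.ins, LTree.leafKeys, h, LTree.ins_leafKeys l k,
          LTree.ins_leafKeys r k, Set.union_singleton, Set.insert_union, Set.union_insert]

/-- The insert edit adds exactly the key `k` to the set of leaf keys, and `k` was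
not among the leaf keys before. -/
theorem stmt7 {α : Type} [LinearOrder α] (T : LTree α) (hT : T.IsBST) (k : α)
    (hk : T.searchKey k ≠ k) :
    (T.ins k).leafKeys = T.leafKeys ∪ {k} ∧ k ∉ T.leafKeys := by
  refine ⟨LTree.ins_leafKeys T k, fun hmem => hk (LTree.searchKey_of_mem T hT k hmem)⟩
end

section
/- Let T be a leaf-oriented binary tree over a linearly ordered key type α satisfying the BST property, and let k : α be a key such that the key of searchLeaf(T, k) equals k and the search path for k in T contains at least one internal node. Then the delete edit del(T, k) also satisfies the BST property. -/
lemma LTree.del_leafL {α : Type} [LinearOrder α] {m k k' : α} {r : LTree α} (h : k < m) :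
    (LTree.node m (LTree.leaf k') r).del k = r := by unfold LTree.del; simp [h]

lemma LTree.del_nodeL {α : Type} [LinearOrder α] {m k ml : α} {ll lr r : LTree α} (h : k < m) :
    (LTree.node m (LTree.node ml ll lr) r).del k
      = LTree.node m ((LTree.node ml ll lr).del k) r := by
  unfold LTree.del; simp [h]; conv_lhs => unfold LTree.del

lemma LTree.del_leafR {α : Type} [LinearOrder α] {m k k' : α} {l : LTree α} (h : ¬ k < m) :
    (LTree.node m l (LTree.leaf k')).del k = l := by unfold LTree.del; simp [h]

lemma LTree.del_nodeR {α : Type} [LinearOrder α] {m k mr : α} {l rl rr : LTree α} (h : ¬ k < m) :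
    (LTree.node m l (LTree.node mr rl rr)).del k
      = LTree.node m l ((LTree.node mr rl rr).del k) := by
  unfold LTree.del; simp [h]; conv_lhs => unfold LTree.del


lemma LTree.del_keys_subset {α : Type} [LinearOrder α] (T : LTree α) (k : α) :
    (T.del k).keys ⊆ T.keys := by
  induction T with
  | leaf k' => simp [LTree.del]
  | node m l r ihl ihr =>
    by_cases h : k < m
    · cases l with
      | leaf k' =>
        rw [LTree.del_leafL h]
        intro x hx; exact Or.inr hx
      | node ml ll lr =>
        rw [LTree.del_nodeL h]; simp only [LTree.keys]
        intro x hx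
        rcases hx with (h1|h1)|h1
        · exact Or.inl (Or.inl h1)
        · exact Or.inl (Or.inr (ihl h1))
        · exact Or.inr h1
    · cases r with
      | leaf k' =>
        rw [LTree.del_leafR h]
        intro x hx; exact Or.inl (Or.inr hx)
      | node mr rl rr =>
        rw [LTree.del_nodeR h]; simp only [LTree.keys]
        intro x hx
        rcases hx with (h1|h1)|h1
        · exact Or.inl (Or.inl h1)
        · exact Or.inl (Or.inr h1)
        · exact Or.inr (ihr h1)

/-- The delete edit preserves the BST property, provided the search for `k` ends at
a leaf with key `k` and the search path contains at least one internal node. -/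
theorem stmt8 {α : Type} [LinearOrder α] (T : LTree α) (hT : T.IsBST) (k : α)
    (hk : T.searchKey k = k) (hint : T.isInternal) :
    (T.del k).IsBST := by
  induction T with
  | leaf k' => exact trivial
  | node m l r ihl ihr =>
    obtain ⟨hlm, hrm, hlb, hrb⟩ := hT
    by_cases h : k < m
    · have hk' : l.searchKey k = k := by simpa [LTree.searchKey, h] using hk
      cases l with
      | leaf _ => rw [LTree.del_leafL h]; exact hrb
      | node ml ll lr =>
        rw [LTree.del_nodeL h]
        exact ⟨fun x hx => hlm x (LTree.del_keys_subset _ k hx), hrm,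
          ihl hlb hk' trivial, hrb⟩
    · have hk' : r.searchKey k = k := by simpa [LTree.searchKey, h] using hk
      cases r with
      | leaf _ => rw [LTree.del_leafR h]; exact hlb
      | node mr rl rr =>
        rw [LTree.del_nodeR h]
        exact ⟨hlm, fun x hx => hrm x (LTree.del_keys_subset _ k hx), hlb,
          ihr hrb hk' trivial⟩
end

section
/- Let T be a leaf-oriented binary tree over a linearly ordered key type α satisfying the BST property, and let k : α be a key such that the key of searchLeaf(T, k) equals k and the search path for k in T contains at least one internal node. Then leafKeys(del(T, k)) = leafKeys(T) \ {k}. -/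
lemma LTree.leafKeys_subset_keys_s9 {α : Type} (t : LTree α) : t.leafKeys ⊆ t.keys := by
  induction t with
  | leaf k => simp [LTree.leafKeys, LTree.keys]
  | node m l r ihl ihr =>
    simp only [LTree.leafKeys, LTree.keys]
    intro x hx
    rcases hx with h | h
    · exact Or.inl (Or.inr (ihl h))
    · exact Or.inr (ihr h)


lemma LTree.del_left_leaf {α : Type} [LinearOrder α] {m a k : α} {r : LTree α} (h : k < m) :
    (LTree.node m (LTree.leaf a) r).del k = r := by
  conv_lhs => rw [LTree.del.eq_def]
  simp [h]

lemma LTree.del_left_node {α : Type} [LinearOrder α] {m ml k : α} {ll lr r : LTree α} (h : k < m) :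
    (LTree.node m (LTree.node ml ll lr) r).del k = LTree.node m ((LTree.node ml ll lr).del k) r := by
  conv_lhs => rw [LTree.del.eq_def]
  simp [h]

lemma LTree.del_right_leaf {α : Type} [LinearOrder α] {m a k : α} {l : LTree α} (h : ¬ k < m) :
    (LTree.node m l (LTree.leaf a)).del k = l := by
  conv_lhs => rw [LTree.del.eq_def]
  simp [h]

lemma LTree.del_right_node {α : Type} [LinearOrder α] {m mr k : α} {l rl rr : LTree α} (h : ¬ k < m) :
    (LTree.node m l (LTree.node mr rl rr)).del k = LTree.node m l ((LTree.node mr rl rr).del k) := by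
  conv_lhs => rw [LTree.del.eq_def]
  simp [h]

/-- The delete edit removes exactly the key `k` from the set of leaf keys. -/
theorem stmt9 {α : Type} [LinearOrder α] (T : LTree α) (hT : T.IsBST) (k : α)
    (hk : T.searchKey k = k) (hint : T.isInternal) :
    (T.del k).leafKeys = T.leafKeys \ {k} := by
  induction T with
  | leaf k' => exact absurd hint (by simp [LTree.isInternal])
  | node m l r ihl ihr =>
    obtain ⟨hl, hr, hbl, hbr⟩ := hT
    by_cases hkm : k < m
    · have hk' : l.searchKey k = k := by simpa [LTree.searchKey, hkm] using hk
      have hknr : k ∉ r.leafKeys := fun h =>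
        absurd (hr k (r.leafKeys_subset_keys_s9 h)) (not_le.mpr hkm)
      cases l with
      | leaf k' =>
        have : k' = k := by simpa [LTree.searchKey] using hk'
        subst this
        rw [LTree.del_left_leaf hkm]
        simp only [LTree.leafKeys]
        ext x
        simp only [Set.mem_diff, Set.mem_union, Set.mem_singleton_iff]
        constructor
        · intro hx
          refine ⟨Or.inr hx, fun hxk => hknr (hxk ▸ hx)⟩
        · rintro ⟨(rfl | hx), hne⟩
          · exact absurd rfl hne
          · exact hx
      | node ml ll lr =>
        have ih := ihl hbl hk' (by trivial)
        rw [LTree.del_left_node hkm]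
        simp only [LTree.leafKeys, ih]
        ext x
        simp only [Set.mem_diff, Set.mem_union, Set.mem_singleton_iff]
        constructor
        · rintro (⟨hx, hne⟩ | hx)
          · exact ⟨Or.inl hx, hne⟩
          · exact ⟨Or.inr hx, fun hxk => hknr (hxk ▸ hx)⟩
        · rintro ⟨(hx | hx), hne⟩
          · exact Or.inl ⟨hx, hne⟩
          · exact Or.inr hx
    · have hk' : r.searchKey k = k := by simpa [LTree.searchKey, hkm] using hk
      have hknl : k ∉ l.leafKeys := fun h =>
        absurd (hl k (l.leafKeys_subset_keys_s9 h)) (not_lt.mpr (not_lt.mp hkm))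
      cases r with
      | leaf k' =>
        have : k' = k := by simpa [LTree.searchKey] using hk'
        subst this
        rw [LTree.del_right_leaf hkm]
        simp only [LTree.leafKeys]
        ext x
        simp only [Set.mem_diff, Set.mem_union, Set.mem_singleton_iff]
        constructor
        · intro hx
          refine ⟨Or.inl hx, fun hxk => hknl (hxk ▸ hx)⟩
        · rintro ⟨(hx | rfl), hne⟩
          · exact hx
          · exact absurd rfl hne
      | node mr rl rr =>
        have ih := ihr hbr hk' (by trivial)
        rw [LTree.del_right_node hkm]
        simp only [LTree.leafKeys, ih]
        ext x
        simp only [Set.mem_diff, Set.mem_union, Set.mem_singleton_iff]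
        constructor
        · rintro (hx | ⟨hx, hne⟩)
          · exact ⟨Or.inl hx, fun hxk => hknl (hxk ▸ hx)⟩
          · exact ⟨Or.inr hx, hne⟩
        · rintro ⟨(hx | hx), hne⟩
          · exact Or.inl hx
          · exact Or.inr ⟨hx, hne⟩
end

section
/- Let T be a leaf-oriented binary tree over a linearly ordered key type α satisfying the BST property, and let k : α be a key such that the key k' of searchLeaf(T, k) satisfies k' ≠ k. Then for every key m : α, searchDirs(T, m) is a prefix of searchDirs(ins(T, k), m); moreover, if searchDirs(T, m) ≠ searchDirs(T, k), then searchDirs(ins(T, k), m) = searchDirs(T, m). -/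
/-- After an insert edit, every search path is extended: for every key `m`, the old
search path for `m` is a prefix of the new one; and every search path that differs
from the search path for the inserted key `k` is unchanged. -/
theorem stmt10 {α : Type} [LinearOrder α] (T : LTree α) (hT : T.IsBST) (k : α)
    (hk : T.searchKey k ≠ k) :
    ∀ m : α,
      T.searchDirs m <+: (T.ins k).searchDirs m ∧
        (T.searchDirs m ≠ T.searchDirs k →
          (T.ins k).searchDirs m = T.searchDirs m) := by
  induction T with
  | leaf k' =>
    intro m
    refine ⟨⟨_, rfl⟩, fun h => absurd rfl h⟩
  | node p l r ihl ihr =>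
    intro m
    have hl : l.IsBST := hT.2.2.1
    have hr : r.IsBST := hT.2.2.2
    by_cases hkp : k < p
    · have hk' : l.searchKey k ≠ k := by simpa [LTree.searchKey, hkp] using hk
      by_cases hmp : m < p
      · obtain ⟨h1, h2⟩ := ihl hl hk' m
        refine ⟨?_, ?_⟩
        · simpa [LTree.searchDirs, LTree.ins, hkp, hmp] using h1
        · intro h
          have h' : l.searchDirs m ≠ l.searchDirs k := by
            simp [LTree.searchDirs, hkp, hmp] at h; exact h
          simp [LTree.searchDirs, LTree.ins, hkp, hmp, h2 h']
      · simp [LTree.searchDirs, LTree.ins, hkp, hmp]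
    · have hk' : r.searchKey k ≠ k := by simpa [LTree.searchKey, hkp] using hk
      by_cases hmp : m < p
      · simp [LTree.searchDirs, LTree.ins, hkp, hmp]
      · obtain ⟨h1, h2⟩ := ihr hr hk' m
        refine ⟨?_, ?_⟩
        · simpa [LTree.searchDirs, LTree.ins, hkp, hmp] using h1
        · intro h
          have h' : r.searchDirs m ≠ r.searchDirs k := by
            simp [LTree.searchDirs, hkp, hmp] at h; exact h
          simp [LTree.searchDirs, LTree.ins, hkp, hmp, h2 h']
end

section
/- Let T be a leaf-oriented binary tree over a linearly ordered key type α satisfying the BST property, and let k : α be a key such that the key of searchLeaf(T, k) equals k and the search path for k in T contains at least one internal node; let ds_p denote searchDirs(T, k) with its last element removed (the position of the last internal node p on the search path for k). Then for every key m : α, if ds_p is not a prefix of searchDirs(T, m), then searchDirs(del(T, k), m) = searchDirs(T, m). -/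
lemma LTree.searchDirs_node_ne_nil {α : Type} [LinearOrder α] (m : α) (l r : LTree α) (k : α) :
    (LTree.node m l r).searchDirs k ≠ [] := by
  simp only [LTree.searchDirs]; split <;> simp

/-- A delete edit changes no search path that avoids the edited position: if the
position of the last internal node on the search path for the deleted key `k`
(namely `(T.searchDirs k).dropLast`) is not a prefix of the search path for `m`,
then the search path for `m` is unchanged by the delete edit. -/
theorem stmt11 {α : Type} [LinearOrder α] (T : LTree α) (hT : T.IsBST) (k : α)
    (hk : T.searchKey k = k) (hint : T.isInternal) :
    ∀ m : α,
      ¬ ((T.searchDirs k).dropLast <+: T.searchDirs m) →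
        (T.del k).searchDirs m = T.searchDirs m := by
  induction T with
  | leaf k' => exact hint.elim
  | node m0 l r ihl ihr =>
    intro m hm
    obtain ⟨h1, h2, hl, hr⟩ := hT
    by_cases hkm : k < m0
    · cases l with
      | leaf k' =>
        exact absurd (by simp [LTree.searchDirs, hkm]) hm
      | node ml ll lr =>
        have hk' : (LTree.node ml ll lr).searchKey k = k := by
          rw [LTree.searchKey, if_pos hkm] at hk; exact hk
        have e1 : (LTree.node m0 (LTree.node ml ll lr) r).searchDirs k
            = TDir.left :: (LTree.node ml ll lr).searchDirs k := by
          rw [LTree.searchDirs, if_pos hkm]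
        rw [e1, List.dropLast_cons_of_ne_nil (LTree.searchDirs_node_ne_nil ml ll lr k)] at hm
        have e2 : (LTree.node m0 (LTree.node ml ll lr) r).del k
            = LTree.node m0 ((LTree.node ml ll lr).del k) r := by
          rw [LTree.del.eq_def]; simp only [if_pos hkm]
        rw [e2]
        by_cases hmm : m < m0
        · have g1 : (LTree.node m0 ((LTree.node ml ll lr).del k) r).searchDirs m
              = TDir.left :: ((LTree.node ml ll lr).del k).searchDirs m := by
            rw [LTree.searchDirs, if_pos hmm]
          have g2 : (LTree.node m0 (LTree.node ml ll lr) r).searchDirs m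
              = TDir.left :: (LTree.node ml ll lr).searchDirs m := by
            rw [LTree.searchDirs, if_pos hmm]
          rw [g2, List.cons_prefix_cons] at hm
          push_neg at hm
          rw [g1, g2]
          exact congrArg _ (ihl hl hk' trivial m (hm rfl))
        · have g1 : (LTree.node m0 ((LTree.node ml ll lr).del k) r).searchDirs m
              = TDir.right :: r.searchDirs m := by
            rw [LTree.searchDirs, if_neg hmm]
          have g2 : (LTree.node m0 (LTree.node ml ll lr) r).searchDirs m
              = TDir.right :: r.searchDirs m := by
            rw [LTree.searchDirs, if_neg hmm]
          rw [g1, g2]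
    · cases r with
      | leaf k' =>
        exact absurd (by simp [LTree.searchDirs, hkm]) hm
      | node mr rl rr =>
        have hk' : (LTree.node mr rl rr).searchKey k = k := by
          rw [LTree.searchKey, if_neg hkm] at hk; exact hk
        have e1 : (LTree.node m0 l (LTree.node mr rl rr)).searchDirs k
            = TDir.right :: (LTree.node mr rl rr).searchDirs k := by
          rw [LTree.searchDirs, if_neg hkm]
        rw [e1, List.dropLast_cons_of_ne_nil (LTree.searchDirs_node_ne_nil mr rl rr k)] at hm
        have e2 : (LTree.node m0 l (LTree.node mr rl rr)).del k
            = LTree.node m0 l ((LTree.node mr rl rr).del k) := by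
          rw [LTree.del.eq_def]; simp only [if_neg hkm]
        rw [e2]
        by_cases hmm : m < m0
        · have g1 : (LTree.node m0 l ((LTree.node mr rl rr).del k)).searchDirs m
              = TDir.left :: l.searchDirs m := by
            rw [LTree.searchDirs, if_pos hmm]
          have g2 : (LTree.node m0 l (LTree.node mr rl rr)).searchDirs m
              = TDir.left :: l.searchDirs m := by
            rw [LTree.searchDirs, if_pos hmm]
          rw [g1, g2]
        · have g1 : (LTree.node m0 l ((LTree.node mr rl rr).del k)).searchDirs m
              = TDir.right :: ((LTree.node mr rl rr).del k).searchDirs m := by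
            rw [LTree.searchDirs, if_neg hmm]
          have g2 : (LTree.node m0 l (LTree.node mr rl rr)).searchDirs m
              = TDir.right :: (LTree.node mr rl rr).searchDirs m := by
            rw [LTree.searchDirs, if_neg hmm]
          rw [g2, List.cons_prefix_cons] at hm
          push_neg at hm
          rw [g1, g2]
          exact congrArg _ (ihr hr hk' trivial m (hm rfl))
end

section
/- Let s1 < s2 be keys in a linearly ordered type α, let T0 = node(s2, leaf(s1), leaf(s2)), and let ops be a list of operations all of whose keys are < s1. Then the tree obtained by applying the operations of ops to T0 in order is well-defined (in particular, whenever a delete edit is performed, the search path for its key contains at least one internal node), satisfies the BST property, and its set of leaf keys equals {s1, s2} ∪ F(ops). -/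
/-- An operation on the set: insert or delete a key. -/
inductive Op (α : Type) where
  | ins (k : α)
  | del (k : α)

/-- The key of an operation. -/
def Op.key {α : Type} : Op α → α
  | .ins k => k
  | .del k => k

/-- Applying an operation to a leaf-oriented BST: `Ins k` performs the insert edit
unless the search for `k` already ends at a leaf with key `k`; `Del k` performs the
delete edit if the search for `k` ends at a leaf with key `k`, and otherwise does
nothing. -/
def applyOp {α : Type} [LinearOrder α] (T : LTree α) : Op α → LTree α
  | .ins k => if T.searchKey k = k then T else T.ins k
  | .del k => if T.searchKey k = k then T.del k else T

/-- The abstract set resulting from applying a list of operations, in order, to the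
empty set: `F([]) = ∅`, `F(ops ++ [Ins k]) = F(ops) ∪ {k}`,
`F(ops ++ [Del k]) = F(ops) \ {k}`. -/
def opsSet {α : Type} (ops : List (Op α)) : Set α :=
  ops.foldl (fun s op => match op with | .ins k => s ∪ {k} | .del k => s \ {k}) ∅

namespace LTree

variable {α : Type} [LinearOrder α]

theorem leafKeys_subset_keys_s12 : ∀ t : LTree α, t.leafKeys ⊆ t.keys
  | leaf k => by simp [leafKeys, keys]
  | node m l r => by
    intro x hx
    rcases hx with hx | hx
    · exact Or.inl (Or.inr (leafKeys_subset_keys_s12 l hx))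
    · exact Or.inr (leafKeys_subset_keys_s12 r hx)

theorem searchKey_mem : ∀ (t : LTree α) (k : α), t.searchKey k ∈ t.leafKeys
  | leaf k', k => by simp [searchKey, leafKeys]
  | node m l r, k => by
    simp only [searchKey, leafKeys]
    split
    · exact Or.inl (searchKey_mem l k)
    · exact Or.inr (searchKey_mem r k)

theorem searchKey_eq_of_mem : ∀ (t : LTree α), t.IsBST → ∀ k ∈ t.leafKeys, t.searchKey k = k
  | leaf k', _, k, hk => by
    simp only [leafKeys, Set.mem_singleton_iff] at hk
    simp [searchKey, hk]
  | node m l r, h, k, hk => by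
    obtain ⟨hl, hr, bl, br⟩ := h
    rcases hk with hk | hk
    · have : k < m := hl k (leafKeys_subset_keys_s12 l hk)
      simp only [searchKey, if_pos this]
      exact searchKey_eq_of_mem l bl k hk
    · have : ¬ k < m := not_lt.mpr (hr k (leafKeys_subset_keys_s12 r hk))
      simp only [searchKey, if_neg this]
      exact searchKey_eq_of_mem r br k hk

theorem leafKeys_ins : ∀ (t : LTree α) (k : α), (t.ins k).leafKeys = t.leafKeys ∪ {k}
  | leaf k', k => by
    rcases le_total k k' with h | h <;>
      simp [ins, leafKeys, min_eq_left, max_eq_right, min_eq_right, max_eq_left, h] <;>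
      exact Set.pair_comm _ _
  | node m l r, k => by
    simp only [ins]
    split <;> simp only [leafKeys, leafKeys_ins] <;> ext x <;> simp <;> tauto

theorem keys_ins : ∀ (t : LTree α) (k : α), (t.ins k).keys = t.keys ∪ {k}
  | leaf k', k => by
    rcases le_total k k' with h | h <;>
      simp [ins, keys, min_eq_left, max_eq_right, min_eq_right, max_eq_left, h] <;>
      ext x <;> simp <;> tauto
  | node m l r, k => by
    simp only [ins]
    split <;> simp only [keys, keys_ins] <;> ext x <;> simp <;> tauto

theorem isBST_ins : ∀ (t : LTree α) (k : α), t.IsBST → t.searchKey k ≠ k → (t.ins k).IsBST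
  | leaf k', k, _, hne => by
    have hkk : k ≠ k' := fun h => hne (by simp [searchKey, h])
    refine ⟨?_, ?_, trivial, trivial⟩
    · intro x hx
      simp only [keys, Set.mem_singleton_iff] at hx
      subst hx
      exact min_lt_max.mpr hkk
    · intro x hx
      simp only [keys, Set.mem_singleton_iff] at hx
      subst hx
      exact le_rfl
  | node m l r, k, h, hne => by
    obtain ⟨hl, hr, bl, br⟩ := h
    simp only [ins]
    split
    next h' =>
      have hne' : l.searchKey k ≠ k := by simpa [searchKey, if_pos h'] using hne
      refine ⟨?_, hr, isBST_ins l k bl hne', br⟩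
      intro x hx
      rw [keys_ins] at hx
      rcases hx with hx | hx
      · exact hl x hx
      · simp only [Set.mem_singleton_iff] at hx; subst hx; exact h'
    next h' =>
      have hne' : r.searchKey k ≠ k := by simpa [searchKey, if_neg h'] using hne
      refine ⟨hl, ?_, bl, isBST_ins r k br hne'⟩
      intro x hx
      rw [keys_ins] at hx
      rcases hx with hx | hx
      · exact hr x hx
      · simp only [Set.mem_singleton_iff] at hx; subst hx; exact not_lt.mp h'

theorem del_leaf (k' k : α) : (leaf k').del k = leaf k' := by rw [del.eq_def]

theorem del_node (m : α) (l r : LTree α) (k : α) :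
    (node m l r).del k =
      if k < m then
        match l with
        | leaf _ => r
        | node ml ll lr => node m ((node ml ll lr).del k) r
      else
        match r with
        | leaf _ => l
        | node mr rl rr => node m l ((node mr rl rr).del k) := by
  rw [del.eq_def]

theorem keys_del_subset (t : LTree α) (k : α) : (t.del k).keys ⊆ t.keys := by
  induction t with
  | leaf k' => simp [del_leaf]
  | node m l r ihl ihr =>
    by_cases h : k < m
    · cases l with
      | leaf j =>
        rw [del_node, if_pos h]
        intro x hx; exact Or.inr hx
      | node ml ll lr =>
        rw [del_node, if_pos h]; simp only [keys]
        intro x hx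
        rcases hx with (hx | hx) | hx
        · exact Or.inl (Or.inl hx)
        · exact Or.inl (Or.inr (ihl hx))
        · exact Or.inr hx
    · cases r with
      | leaf j =>
        rw [del_node, if_neg h]
        intro x hx; exact Or.inl (Or.inr hx)
      | node mr rl rr =>
        rw [del_node, if_neg h]; simp only [keys]
        intro x hx
        rcases hx with (hx | hx) | hx
        · exact Or.inl (Or.inl hx)
        · exact Or.inl (Or.inr hx)
        · exact Or.inr (ihr hx)

theorem isBST_del (t : LTree α) (k : α) (h : t.IsBST) : (t.del k).IsBST := by
  induction t with
  | leaf k' => simpa [del_leaf] using h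
  | node m l r ihl ihr =>
    obtain ⟨hl, hr, bl, br⟩ := h
    by_cases h : k < m
    · cases l with
      | leaf j => rw [del_node, if_pos h]; exact br
      | node ml ll lr =>
        rw [del_node, if_pos h]
        exact ⟨fun x hx => hl x (keys_del_subset _ k hx), hr, ihl bl, br⟩
    · cases r with
      | leaf j => rw [del_node, if_neg h]; exact bl
      | node mr rl rr =>
        rw [del_node, if_neg h]
        exact ⟨hl, fun x hx => hr x (keys_del_subset _ k hx), bl, ihr br⟩

theorem leafKeys_del (t : LTree α) (k : α) (hb : t.IsBST) (hint : t.isInternal)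
    (hs : t.searchKey k = k) : (t.del k).leafKeys = t.leafKeys \ {k} := by
  induction t with
  | leaf k' => exact absurd hint (by simp [isInternal])
  | node m l r ihl ihr =>
    obtain ⟨hl, hr, bl, br⟩ := hb
    by_cases h : k < m
    · have hsk : l.searchKey k = k := by simpa [searchKey, if_pos h] using hs
      have hkr : k ∉ r.leafKeys := fun hk =>
        absurd (hr k (leafKeys_subset_keys_s12 r hk)) (not_le.mpr h)
      cases l with
      | leaf j =>
        have hj : j = k := hsk
        subst hj
        rw [del_node, if_pos h]; simp only [leafKeys]
        ext x
        simp only [Set.mem_diff, Set.mem_union, Set.mem_singleton_iff]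
        constructor
        · intro hx; exact ⟨Or.inr hx, fun he => hkr (he ▸ hx)⟩
        · rintro ⟨hx | hx, hne⟩
          · exact absurd hx hne
          · exact hx
      | node ml ll lr =>
        rw [del_node, if_pos h]; simp only [leafKeys, ihl bl trivial hsk]
        ext x
        simp only [Set.mem_diff, Set.mem_union, Set.mem_singleton_iff]
        constructor
        · rintro (⟨hx, hne⟩ | hx)
          · exact ⟨Or.inl hx, hne⟩
          · exact ⟨Or.inr hx, fun he => hkr (he ▸ hx)⟩
        · rintro ⟨hx | hx, hne⟩
          · exact Or.inl ⟨hx, hne⟩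
          · exact Or.inr hx
    · have hsk : r.searchKey k = k := by simpa [searchKey, if_neg h] using hs
      have hkl : k ∉ l.leafKeys := fun hk =>
        absurd (hl k (leafKeys_subset_keys_s12 l hk)) (fun hlt => h hlt)
      cases r with
      | leaf j =>
        have hj : j = k := hsk
        subst hj
        rw [del_node, if_neg h]; simp only [leafKeys]
        ext x
        simp only [Set.mem_diff, Set.mem_union, Set.mem_singleton_iff]
        constructor
        · intro hx; exact ⟨Or.inl hx, fun he => hkl (he ▸ hx)⟩
        · rintro ⟨hx | hx, hne⟩
          · exact hx
          · exact absurd hx hne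
      | node mr rl rr =>
        rw [del_node, if_neg h]; simp only [leafKeys, ihr br trivial hsk]
        ext x
        simp only [Set.mem_diff, Set.mem_union, Set.mem_singleton_iff]
        constructor
        · rintro (hx | ⟨hx, hne⟩)
          · exact ⟨Or.inl hx, fun he => hkl (he ▸ hx)⟩
          · exact ⟨Or.inr hx, hne⟩
        · rintro ⟨hx | hx, hne⟩
          · exact Or.inl hx
          · exact Or.inr ⟨hx, hne⟩

theorem internal_of_two {t : LTree α} {a b : α} (ha : a ∈ t.leafKeys)
    (hb : b ∈ t.leafKeys) (hab : a ≠ b) : t.isInternal := by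
  cases t with
  | leaf j =>
    simp only [leafKeys, Set.mem_singleton_iff] at ha hb
    exact absurd (ha.trans hb.symm) hab
  | node m l r => trivial

end LTree

section Main

variable {α : Type} [LinearOrder α]

/-- The abstract step function on sets. -/
def opStep (s : Set α) (op : Op α) : Set α :=
  match op with | .ins k => s ∪ {k} | .del k => s \ {k}

theorem opStep_ins (s : Set α) (k : α) : opStep s (.ins k) = s ∪ {k} := rfl

theorem opStep_del (s : Set α) (k : α) : opStep s (.del k) = s \ {k} := rfl

theorem main_invariant (s1 s2 : α) (h12 : s1 < s2) :
    ∀ (ops : List (Op α)) (T : LTree α) (S : Set α),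
      (∀ op ∈ ops, op.key < s1) → T.IsBST →
      T.leafKeys = {s1, s2} ∪ S → (∀ x ∈ S, x < s1) →
      (∀ (n : ℕ) (hn : n < ops.length) (k : α),
          ops.get ⟨n, hn⟩ = Op.del k →
          ((ops.take n).foldl applyOp T).searchKey k = k →
          ((ops.take n).foldl applyOp T).isInternal) ∧
        (ops.foldl applyOp T).IsBST ∧
        (ops.foldl applyOp T).leafKeys =
          {s1, s2} ∪ ops.foldl opStep S := by
  intro ops
  induction ops with
  | nil =>
    intro T S _ hbst hlk hS
    exact ⟨fun n hn => absurd hn (by simp), hbst, by simpa using hlk⟩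
  | cons op ops ih =>
    intro T S hk hbst hlk hS
    have hs1 : s1 ∈ T.leafKeys := by rw [hlk]; left; left; rfl
    have hs2 : s2 ∈ T.leafKeys := by rw [hlk]; left; right; rfl
    have hTint : T.isInternal := LTree.internal_of_two hs1 hs2 (ne_of_lt h12)
    have hopk : op.key < s1 := hk op (by simp)
    have hkops : ∀ o ∈ ops, o.key < s1 := fun o ho => hk o (by simp [ho])
    -- key step: invariant for applyOp T op
    have step : (applyOp T op).IsBST ∧
        (applyOp T op).leafKeys = {s1, s2} ∪ opStep S op ∧
        (∀ x ∈ opStep S op, x < s1) := by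
      cases op with
      | ins k =>
        simp only [opStep_ins]
        have hks1 : k < s1 := hopk
        by_cases hsk : T.searchKey k = k
        · have hkmem : k ∈ T.leafKeys := hsk ▸ T.searchKey_mem k
          refine ⟨by simpa [applyOp, hsk] using hbst, ?_, ?_⟩
          · simp only [applyOp, if_pos hsk]
            rw [hlk] at hkmem ⊢
            rw [← Set.union_assoc]
            exact (Set.union_eq_self_of_subset_right
              (Set.singleton_subset_iff.mpr hkmem)).symm
          · intro x hx
            rcases hx with hx | hx
            · exact hS x hx
            · simp only [Set.mem_singleton_iff] at hx; subst hx; exact hks1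
        · refine ⟨?_, ?_, ?_⟩
          · simpa [applyOp, if_neg hsk] using LTree.isBST_ins T k hbst hsk
          · simp only [applyOp, if_neg hsk, LTree.leafKeys_ins, hlk]
            ext x; simp only [Set.mem_union]; tauto
          · intro x hx
            rcases hx with hx | hx
            · exact hS x hx
            · simp only [Set.mem_singleton_iff] at hx; subst hx; exact hks1
      | del k =>
        simp only [opStep_del]
        have hks1 : k < s1 := hopk
        have hkns : k ∉ ({s1, s2} : Set α) := by
          simp only [Set.mem_insert_iff, Set.mem_singleton_iff]
          push_neg
          exact ⟨ne_of_lt hks1, ne_of_lt (hks1.trans h12)⟩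
        by_cases hsk : T.searchKey k = k
        · refine ⟨?_, ?_, ?_⟩
          · simpa [applyOp, hsk] using LTree.isBST_del T k hbst
          · simp only [applyOp, if_pos hsk,
              LTree.leafKeys_del T k hbst hTint hsk, hlk]
            ext x
            simp only [Set.mem_diff, Set.mem_union, Set.mem_singleton_iff,
              Set.mem_insert_iff] at *
            constructor
            · rintro ⟨hx | hx, hne⟩
              · exact Or.inl hx
              · exact Or.inr ⟨hx, hne⟩
            · rintro (hx | ⟨hx, hne⟩)
              · refine ⟨Or.inl hx, fun he => hkns ?_⟩
                subst he
                simpa using hx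
              · exact ⟨Or.inr hx, hne⟩
          · intro x hx; exact hS x hx.1
        · have hknm : k ∉ T.leafKeys := fun hm =>
            hsk (LTree.searchKey_eq_of_mem T hbst k hm)
          have hknS : k ∉ S := fun hm => hknm (by rw [hlk]; exact Or.inr hm)
          refine ⟨by simpa [applyOp, if_neg hsk] using hbst, ?_, ?_⟩
          · simp only [applyOp, if_neg hsk, hlk]
            ext x
            simp only [Set.mem_union, Set.mem_diff, Set.mem_singleton_iff]
            constructor
            · rintro (hx | hx)
              · exact Or.inl hx
              · exact Or.inr ⟨hx, fun he => hknS (he ▸ hx)⟩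
            · rintro (hx | ⟨hx, _⟩)
              · exact Or.inl hx
              · exact Or.inr hx
          · intro x hx; exact hS x hx.1
    obtain ⟨sb, slk, sS⟩ := step
    have IH := ih (applyOp T op) _ hkops sb slk sS
    refine ⟨?_, ?_, ?_⟩
    · intro n hn k hget hsk
      cases n with
      | zero =>
        simpa using hTint
      | succ n =>
        simp only [List.take_succ_cons, List.foldl_cons] at hsk ⊢
        exact IH.1 n (by simpa using hn) k (by simpa using hget) hsk
    · simpa using IH.2.1
    · simpa using IH.2.2

end Main


/-- Starting from the tree `node(s2, leaf(s1), leaf(s2))` with sentinel keys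
`s1 < s2`, applying any list of operations with keys `< s1` is well-defined (every
delete edit performed happens on a tree whose search path for the deleted key
contains an internal node), preserves the BST property, and yields a tree whose
leaf keys are exactly `{s1, s2}` together with the abstract set of the operations. -/
theorem stmt12 {α : Type} [LinearOrder α] (s1 s2 : α) (h12 : s1 < s2)
    (ops : List (Op α)) (hkeys : ∀ op ∈ ops, op.key < s1) :
    (∀ (n : ℕ) (hn : n < ops.length) (k : α),
        ops.get ⟨n, hn⟩ = Op.del k →
        ((ops.take n).foldl applyOp
            (LTree.node s2 (LTree.leaf s1) (LTree.leaf s2))).searchKey k = k →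
        ((ops.take n).foldl applyOp
            (LTree.node s2 (LTree.leaf s1) (LTree.leaf s2))).isInternal) ∧
      (ops.foldl applyOp (LTree.node s2 (LTree.leaf s1) (LTree.leaf s2))).IsBST ∧
      (ops.foldl applyOp
          (LTree.node s2 (LTree.leaf s1) (LTree.leaf s2))).leafKeys =
        {s1, s2} ∪ opsSet ops := by
  have hb : (LTree.node s2 (LTree.leaf s1) (LTree.leaf s2)).IsBST := by
    refine ⟨?_, ?_, trivial, trivial⟩ <;> intro x hx <;>
      simp only [LTree.keys, Set.mem_singleton_iff] at hx <;> subst hx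
    · exact h12
    · exact le_rfl
  have hlk : (LTree.node s2 (LTree.leaf s1) (LTree.leaf s2)).leafKeys
      = {s1, s2} ∪ (∅ : Set α) := by
    simp only [LTree.leafKeys, Set.union_empty, Set.singleton_union]
  have H := main_invariant s1 s2 h12 ops _ ∅ hkeys hb hlk (by simp)
  exact ⟨H.1, H.2.1, H.2.2⟩
end

section
/- Let w be a versioned tree over a linearly ordered key type α, let ds be a child position in w, let u be the versioned subtree of w at position ds, and let w' be obtained from w by replacing the subtree at position ds with a new versioned node v whose prev pointer is some(u) and whose sequence number is j. Then for every i < j, if the version-i view T_i(w) is defined, then T_i(w') is defined and T_i(w') = T_i(w). -/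
/-- A versioned node: a key, a sequence number, an optional pointer to the previous
version of the node, and (for internal nodes) two children. -/
inductive VNode (α : Type) where
  | vleaf (k : α) (s : ℕ) (p : Option (VNode α))
  | vnode (k : α) (s : ℕ) (p : Option (VNode α)) (l r : VNode α)

namespace VNode

variable {α : Type}

/-- The sequence number of a versioned node. -/
def seq : VNode α → ℕ
  | vleaf _ s _ => s
  | vnode _ s _ _ _ => s

/-- The `prev` pointer of a versioned node. -/
def prev : VNode α → Option (VNode α)
  | vleaf _ _ p => p
  | vnode _ _ p _ _ => p

/-- The version-`i` view of a versioned node: follow `prev` pointers until reaching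
the first node whose sequence number is `≤ i`, and when that node is internal,
recursively take the version-`i` views of its two children.  Returns `none` if some
needed resolution does not exist. -/
def view (i : ℕ) : VNode α → Option (LTree α)
  | vleaf k s p =>
      if s ≤ i then some (LTree.leaf k)
      else
        match p with
        | none => none
        | some v => view i v
  | vnode k s p l r =>
      if s ≤ i then
        match view i l, view i r with
        | some tl, some tr => some (LTree.node k tl tr)
        | _, _ => none
      else
        match p with
        | none => none
        | some v => view i v

/-- The versioned subtree at a child position (a list of left/right directions
followed along the actual child fields, ignoring `prev` pointers), if it exists. -/
def childAt? : VNode α → List TDir → Option (VNode α)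
  | u, [] => some u
  | vleaf _ _ _, _ :: _ => none
  | vnode _ _ _ l _, TDir.left :: ds => l.childAt? ds
  | vnode _ _ _ _ r, TDir.right :: ds => r.childAt? ds

/-- Replace the subtree at a child position by a new versioned node (leaving the
tree unchanged if the position does not exist). -/
def replaceAt : VNode α → List TDir → VNode α → VNode α
  | _, [], v => v
  | vleaf k s p, _ :: _, _ => vleaf k s p
  | vnode k s p l r, TDir.left :: ds, v => vnode k s p (l.replaceAt ds v) r
  | vnode k s p l r, TDir.right :: ds, v => vnode k s p l (r.replaceAt ds v)

end VNode

theorem view_new {α : Type} (u v : VNode α) (hprev : v.prev = some u)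
    (i : ℕ) (hi : ¬ v.seq ≤ i) : VNode.view i v = VNode.view i u := by
  cases v with
  | vleaf k s p =>
      simp only [VNode.prev] at hprev
      simp only [VNode.seq] at hi
      subst hprev
      rw [VNode.view.eq_2, if_neg hi]
  | vnode k s p l r =>
      simp only [VNode.prev] at hprev
      simp only [VNode.seq] at hi
      subst hprev
      rw [VNode.view.eq_4, if_neg hi]

theorem view_replace {α : Type} (v : VNode α) (j : ℕ) (hseq : v.seq = j) :
    ∀ (ds : List TDir) (w u : VNode α), w.childAt? ds = some u →
      v.prev = some u → ∀ i < j,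
      VNode.view i (w.replaceAt ds v) = VNode.view i w
  | [], w, u, hu, hprev, i, hi => by
      simp only [VNode.childAt?, Option.some.injEq] at hu
      subst hu
      rw [VNode.replaceAt]
      exact view_new _ _ hprev i (by omega)
  | d :: tl, .vleaf k s p, u, hu, hprev, i, hi => by
      simp [VNode.childAt?] at hu
  | .left :: tl, .vnode k s p l r, u, hu, hprev, i, hi => by
      rw [VNode.childAt?] at hu
      rw [VNode.replaceAt]
      have h := view_replace v j hseq tl l u hu hprev i hi
      cases p
      · rw [VNode.view.eq_3, VNode.view.eq_3, h]
      · rw [VNode.view.eq_4, VNode.view.eq_4, h]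
  | .right :: tl, .vnode k s p l r, u, hu, hprev, i, hi => by
      rw [VNode.childAt?] at hu
      rw [VNode.replaceAt]
      have h := view_replace v j hseq tl r u hu hprev i hi
      cases p
      · rw [VNode.view.eq_3, VNode.view.eq_3, h]
      · rw [VNode.view.eq_4, VNode.view.eq_4, h]

/-- Persistence. -/
theorem stmt14 {α : Type} [LinearOrder α] (w : VNode α) (ds : List TDir)
    (u v : VNode α) (hu : w.childAt? ds = some u)
    (j : ℕ) (hprev : v.prev = some u) (hseq : v.seq = j)
    (w' : VNode α) (hw' : w' = w.replaceAt ds v) :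
    ∀ i < j, ∀ t : LTree α, VNode.view i w = some t → VNode.view i w' = some t := by
  intro i hi t ht
  subst hw'
  rw [view_replace v j hseq ds w u hu hprev i hi]
  exact ht
end
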